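/- Let I ⊆ ℝ be open, let H : ℝ → ℝ be three times differentiable on I, and let G : ℝ → ℝ satisfy G'(t) = H(t) for all t ∈ I. On ℝ⁵ × I with coordinates (x,y,z,p,q,t), define the functions X = −2t, Y = p + tq + (2G(t) − tH(t))x + H(t)y, Z = z − px − qy − ((1/2)t²H'(t) − tH(t) + G(t))x² − (H(t) − tH'(t))xy − (1/2)H'(t)y², P = −(1/2)q − (1/2)(H(t) − tH'(t))x − (1/2)H'(t)y, Q = (1/4)H''(t)(y − tx), L = (1/8)(H'''(t)(tx−y) + H''(t)x), and define the linear functionals on tangent vectors v = (v_x,v_y,v_z,v_p,v_q,v_t): ω₂(v) = v_p + (t²H'(t) − 2tH(t) + 2G(t))v_x + (H(t) − tH'(t))v_y, ω₃(v) = v_q + (H(t) − tH'(t))v_x + H'(t)v_y, ω₄(v) = v_y − t·v_x, ϖ(v) = v_z − p·v_x − q·v_y. Then at every point m = (x,y,z,p,q,t) and for every v: DY(v) − P(m)·DX(v) = ω₂(v) + t·ω₃(v); DP(v) − Q(m)·DX(v) = −(1/2)ω₃(v); DQ(v) − L(m)·DX(v) = (1/4)H''(t)·ω₄(v); and if moreover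 H''(t) ≠ 0, then DZ(v) − (4Q(m)²/H''(t))·DX(v) = ϖ(v) − x·ω₂(v) − y·ω₃(v). Here Df(v) denotes the Fréchet derivative of f at m applied to v. -/

import Mathlib

noncomputable section

/-- Points (and tangent vectors) of the correspondence space `ℝ⁵ × ℝ`, with coordinates
`(x, y, z, p, q, t)`. -/
abbrev R6 : Type := ℝ × ℝ × ℝ × ℝ × ℝ × ℝ

namespace Stmt14

variable (H G : ℝ → ℝ)

/-- The coordinate function `X = −2t`. -/
def Xc (m : R6) : ℝ := -2 * m.2.2.2.2.2
/-- The coordinate function `Y = p + tq + (2G(t) − tH(t))x + H(t)y`. -/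
def Yc (m : R6) : ℝ :=
  m.2.2.2.1 + m.2.2.2.2.2 * m.2.2.2.2.1
    + (2 * G m.2.2.2.2.2 - m.2.2.2.2.2 * H m.2.2.2.2.2) * m.1 + H m.2.2.2.2.2 * m.2.1
/-- The coordinate function
`Z = z − px − qy − ((1/2)t²H'(t) − tH(t) + G(t))x² − (H(t) − tH'(t))xy − (1/2)H'(t)y²`. -/
def Zc (m : R6) : ℝ :=
  m.2.2.1 - m.2.2.2.1 * m.1 - m.2.2.2.2.1 * m.2.1
    - (1 / 2 * m.2.2.2.2.2 ^ 2 * deriv H m.2.2.2.2.2 - m.2.2.2.2.2 * H m.2.2.2.2.2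
        + G m.2.2.2.2.2) * m.1 ^ 2
    - (H m.2.2.2.2.2 - m.2.2.2.2.2 * deriv H m.2.2.2.2.2) * m.1 * m.2.1
    - 1 / 2 * deriv H m.2.2.2.2.2 * m.2.1 ^ 2
/-- The coordinate function `P = −(1/2)q − (1/2)(H(t) − tH'(t))x − (1/2)H'(t)y`. -/
def Pc (m : R6) : ℝ :=
  -(1 / 2) * m.2.2.2.2.1
    - 1 / 2 * (H m.2.2.2.2.2 - m.2.2.2.2.2 * deriv H m.2.2.2.2.2) * m.1
    - 1 / 2 * deriv H m.2.2.2.2.2 * m.2.1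
/-- The coordinate function `Q = (1/4)H''(t)(y − tx)`. -/
def Qc (m : R6) : ℝ :=
  1 / 4 * deriv (deriv H) m.2.2.2.2.2 * (m.2.1 - m.2.2.2.2.2 * m.1)
/-- The fibre coordinate `L = (1/8)(H'''(t)(tx − y) + H''(t)x)`. -/
def Lc (m : R6) : ℝ :=
  1 / 8 * (deriv (deriv (deriv H)) m.2.2.2.2.2 * (m.2.2.2.2.2 * m.1 - m.2.1)
    + deriv (deriv H) m.2.2.2.2.2 * m.1)

/-- The structural 1-form `ω₂ = dp + (t²H' − 2tH + 2G)dx + (H − tH')dy`. -/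
def ω₂ (m v : R6) : ℝ :=
  v.2.2.2.1
    + (m.2.2.2.2.2 ^ 2 * deriv H m.2.2.2.2.2 - 2 * m.2.2.2.2.2 * H m.2.2.2.2.2
        + 2 * G m.2.2.2.2.2) * v.1
    + (H m.2.2.2.2.2 - m.2.2.2.2.2 * deriv H m.2.2.2.2.2) * v.2.1
/-- The structural 1-form `ω₃ = dq + (H − tH')dx + H'dy`. -/
def ω₃ (m v : R6) : ℝ :=
  v.2.2.2.2.1 + (H m.2.2.2.2.2 - m.2.2.2.2.2 * deriv H m.2.2.2.2.2) * v.1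
    + deriv H m.2.2.2.2.2 * v.2.1
/-- The structural 1-form `ω₄ = dy − tdx`. -/
def ω₄ (m v : R6) : ℝ := v.2.1 - m.2.2.2.2.2 * v.1
/-- The contact form `ϖ = dz − pdx − qdy`. -/
def ϖ (m v : R6) : ℝ := v.2.2.1 - m.2.2.2.1 * v.1 - m.2.2.2.2.1 * v.2.1

end Stmt14

open Stmt14

namespace DFTaux

noncomputable def π1 : R6 →L[ℝ] ℝ := ContinuousLinearMap.fst ℝ ℝ _
noncomputable def π2 : R6 →L[ℝ] ℝ :=
  (ContinuousLinearMap.fst ℝ ℝ _).comp (ContinuousLinearMap.snd ℝ ℝ (ℝ × ℝ × ℝ × ℝ × ℝ))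
noncomputable def π3 : R6 →L[ℝ] ℝ :=
  ((ContinuousLinearMap.fst ℝ ℝ _).comp (ContinuousLinearMap.snd ℝ ℝ (ℝ × ℝ × ℝ × ℝ))).comp
    (ContinuousLinearMap.snd ℝ ℝ (ℝ × ℝ × ℝ × ℝ × ℝ))
noncomputable def π4 : R6 →L[ℝ] ℝ :=
  (((ContinuousLinearMap.fst ℝ ℝ _).comp (ContinuousLinearMap.snd ℝ ℝ (ℝ × ℝ × ℝ))).comp
    (ContinuousLinearMap.snd ℝ ℝ (ℝ × ℝ × ℝ × ℝ))).comp
    (ContinuousLinearMap.snd ℝ ℝ (ℝ × ℝ × ℝ × ℝ × ℝ))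
noncomputable def π5 : R6 →L[ℝ] ℝ :=
  ((((ContinuousLinearMap.fst ℝ ℝ _).comp (ContinuousLinearMap.snd ℝ ℝ (ℝ × ℝ))).comp
    (ContinuousLinearMap.snd ℝ ℝ (ℝ × ℝ × ℝ))).comp
    (ContinuousLinearMap.snd ℝ ℝ (ℝ × ℝ × ℝ × ℝ))).comp
    (ContinuousLinearMap.snd ℝ ℝ (ℝ × ℝ × ℝ × ℝ × ℝ))
noncomputable def π6 : R6 →L[ℝ] ℝ :=
  ((((ContinuousLinearMap.snd ℝ ℝ ℝ).comp (ContinuousLinearMap.snd ℝ ℝ (ℝ × ℝ))).comp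
    (ContinuousLinearMap.snd ℝ ℝ (ℝ × ℝ × ℝ))).comp
    (ContinuousLinearMap.snd ℝ ℝ (ℝ × ℝ × ℝ × ℝ))).comp
    (ContinuousLinearMap.snd ℝ ℝ (ℝ × ℝ × ℝ × ℝ × ℝ))

@[simp] lemma π1_apply (v : R6) : π1 v = v.1 := rfl
@[simp] lemma π2_apply (v : R6) : π2 v = v.2.1 := rfl
@[simp] lemma π3_apply (v : R6) : π3 v = v.2.2.1 := rfl
@[simp] lemma π4_apply (v : R6) : π4 v = v.2.2.2.1 := rfl
@[simp] lemma π5_apply (v : R6) : π5 v = v.2.2.2.2.1 := rfl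
@[simp] lemma π6_apply (v : R6) : π6 v = v.2.2.2.2.2 := rfl

end DFTaux

open DFTaux


/-- The double fibration transform: the differentials of the coordinate functions
`(X, Y, Z, P, Q, L)` on the correspondence space satisfy
`dY − PdX = ω₂ + tω₃`, `dP − QdX = −(1/2)ω₃`, `dQ − LdX = (1/4)H''·ω₄` and, where
`H'' ≠ 0`, `dZ − (4Q²/H'')dX = ϖ − xω₂ − yω₃`. -/
theorem double_fibration_transform
    (I : Set ℝ) (hI : IsOpen I) (H G : ℝ → ℝ)
    (hH0 : ∀ t ∈ I, DifferentiableAt ℝ H t)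
    (hH1 : ∀ t ∈ I, DifferentiableAt ℝ (deriv H) t)
    (hH2 : ∀ t ∈ I, DifferentiableAt ℝ (deriv (deriv H)) t)
    (hG : ∀ t ∈ I, HasDerivAt G (H t) t) :
    ∀ m : R6, m.2.2.2.2.2 ∈ I → ∀ v : R6,
      (fderiv ℝ (Yc H G) m v - Pc H m * fderiv ℝ Xc m v = ω₂ H G m v + m.2.2.2.2.2 * ω₃ H m v)
      ∧ (fderiv ℝ (Pc H) m v - Qc H m * fderiv ℝ Xc m v = -(1 / 2) * ω₃ H m v)
      ∧ (fderiv ℝ (Qc H) m v - Lc H m * fderiv ℝ Xc m v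
          = 1 / 4 * deriv (deriv H) m.2.2.2.2.2 * ω₄ m v)
      ∧ (deriv (deriv H) m.2.2.2.2.2 ≠ 0 →
          fderiv ℝ (Zc H G) m v
              - (4 * Qc H m ^ 2 / deriv (deriv H) m.2.2.2.2.2) * fderiv ℝ Xc m v
            = ϖ m v - m.1 * ω₂ H G m v - m.2.1 * ω₃ H m v) := by
  intro m hm v
  set t : ℝ := m.2.2.2.2.2 with ht
  have hH0' : HasDerivAt H (deriv H t) t := (hH0 t hm).hasDerivAt
  have hH1' : HasDerivAt (deriv H) (deriv (deriv H) t) t := (hH1 t hm).hasDerivAt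
  have hH2' : HasDerivAt (deriv (deriv H)) (deriv (deriv (deriv H)) t) t := (hH2 t hm).hasDerivAt
  have hG' : HasDerivAt G (H t) t := hG t hm
  have hp1 : HasFDerivAt (fun m : R6 => m.1) π1 m := π1.hasFDerivAt
  have hp2 : HasFDerivAt (fun m : R6 => m.2.1) π2 m := π2.hasFDerivAt
  have hp3 : HasFDerivAt (fun m : R6 => m.2.2.1) π3 m := π3.hasFDerivAt
  have hp4 : HasFDerivAt (fun m : R6 => m.2.2.2.1) π4 m := π4.hasFDerivAt
  have hp5 : HasFDerivAt (fun m : R6 => m.2.2.2.2.1) π5 m := π5.hasFDerivAt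
  have hp6 : HasFDerivAt (fun m : R6 => m.2.2.2.2.2) π6 m := π6.hasFDerivAt
  -- H(t), H'(t), H''(t), G(t) as functions of m
  have hHt : HasFDerivAt (fun m : R6 => H m.2.2.2.2.2) (deriv H t • π6) m :=
    hH0'.comp_hasFDerivAt m hp6
  have hH't : HasFDerivAt (fun m : R6 => deriv H m.2.2.2.2.2) (deriv (deriv H) t • π6) m := by
    have h := hH1'.comp_hasFDerivAt m hp6; exact h
  have hH''t : HasFDerivAt (fun m : R6 => deriv (deriv H) m.2.2.2.2.2)
      (deriv (deriv (deriv H)) t • π6) m := by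
      have h := hH2'.comp_hasFDerivAt m hp6; exact h
  have hGt : HasFDerivAt (fun m : R6 => G m.2.2.2.2.2) (H t • π6) m :=
    hG'.comp_hasFDerivAt m hp6
  -- X
  have hX : HasFDerivAt Xc ((-2 : ℝ) • π6) m := hp6.const_mul (-2)
  have eX : fderiv ℝ Xc m = (-2 : ℝ) • π6 := hX.fderiv
  -- Y
  have hc3 : HasDerivAt (fun s => 2 * G s - s * H s)
      (2 * H t - (1 * H t + t * deriv H t)) t :=
    (hG'.const_mul 2).sub ((hasDerivAt_id t).mul hH0')
  have hY := ((hp4.add (hp6.mul hp5)).add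
      ((hc3.comp_hasFDerivAt m hp6).mul hp1)).add (hHt.mul hp2)
  have eY : fderiv ℝ (Yc H G) m = _ := hY.fderiv
  -- P
  have hc2 : HasDerivAt (fun s => 1 / 2 * (H s - s * deriv H s))
      (1 / 2 * (deriv H t - (1 * deriv H t + t * deriv (deriv H) t))) t :=
    (hH0'.sub ((hasDerivAt_id t).mul hH1')).const_mul (1 / 2)
  have hc2' : HasDerivAt (fun s => 1 / 2 * deriv H s) (1 / 2 * deriv (deriv H) t) t :=
    hH1'.const_mul (1 / 2)
  have hP := ((hp5.const_mul (-(1 / 2))).sub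
      ((hc2.comp_hasFDerivAt m hp6).mul hp1)).sub ((hc2'.comp_hasFDerivAt m hp6).mul hp2)
  have eP : fderiv ℝ (Pc H) m = _ := hP.fderiv
  -- Q
  have hcQ : HasDerivAt (fun s => 1 / 4 * deriv (deriv H) s)
      (1 / 4 * deriv (deriv (deriv H)) t) t := hH2'.const_mul (1 / 4)
  have hQ := (hcQ.comp_hasFDerivAt m hp6).mul (hp2.sub (hp6.mul hp1))
  have eQ : fderiv ℝ (Qc H) m = _ := hQ.fderiv
  -- Z
  have hcE : HasDerivAt (fun s => 1 / 2 * s ^ 2 * deriv H s - s * H s + G s)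
      (((1 / 2 * ((2 : ℕ) * t ^ (2 - 1))) * deriv H t + 1 / 2 * t ^ 2 * deriv (deriv H) t)
        - (1 * H t + t * deriv H t) + H t) t :=
    ((((hasDerivAt_pow 2 t).const_mul (1 / 2)).mul hH1').sub
      ((hasDerivAt_id t).mul hH0')).add hG'
  have hcF : HasDerivAt (fun s => H s - s * deriv H s)
      (deriv H t - (1 * deriv H t + t * deriv (deriv H) t)) t :=
    hH0'.sub ((hasDerivAt_id t).mul hH1')
  have hx2 := (hasDerivAt_pow 2 m.1).comp_hasFDerivAt m hp1
  have hy2 := (hasDerivAt_pow 2 m.2.1).comp_hasFDerivAt m hp2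
  have hZ := (((((hp3.sub (hp4.mul hp1)).sub (hp5.mul hp2)).sub
      ((hcE.comp_hasFDerivAt m hp6).mul hx2)).sub
      (((hcF.comp_hasFDerivAt m hp6).mul hp1).mul hp2)).sub
      ((hc2'.comp_hasFDerivAt m hp6).mul hy2))
  have eZ : fderiv ℝ (Zc H G) m = _ := hZ.fderiv
  rw [eX, eY, eP, eQ, eZ]
  simp only [ContinuousLinearMap.add_apply, ContinuousLinearMap.smul_apply,
    ContinuousLinearMap.coe_sub', Pi.sub_apply, π1_apply, π2_apply, π3_apply, π4_apply,
    π5_apply, π6_apply, smul_eq_mul, Function.comp, Pi.mul_apply, Function.comp_apply]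
  refine ⟨?_, ?_, ?_, ?_⟩
  · simp only [Pc, Qc, Lc, ω₂, ω₃, ω₄, ϖ, ← ht]; ring
  · simp only [Pc, Qc, Lc, ω₂, ω₃, ω₄, ϖ, ← ht]; ring
  · simp only [Pc, Qc, Lc, ω₂, ω₃, ω₄, ϖ, ← ht]; ring
  · intro hne
    simp only [Pc, Qc, Lc, ω₂, ω₃, ω₄, ϖ, ← ht]
    field_simp
    ring
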